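/- Lemma 4.1 (control of the backward diffusion term): Let φ be a grid function such that φ and Δ_h φ (extended to ghost cells via its own discrete Neumann BC) both satisfy the discrete Neumann BC. Then for every ε > 0, ‖Δ_h φ‖_m^2 ≤ (1/(3ε^2)) ‖φ‖_m^2 + (2ε/3) ‖∇_h(Δ_h φ)‖^2. -/

import Mathlib

open Finset

/-- Discrete inner product `(f,g)_m` over interior cells `i = 1,...,Nx`, `j = 1,...,Ny`. -/
noncomputable def innerM (Nx Ny : ℕ) (hx hy : ℝ) (f g : ℕ → ℕ → ℝ) : ℝ :=
  ∑ i ∈ Finset.Icc 1 Nx, ∑ j ∈ Finset.Icc 1 Ny, hx * hy * f i j * g i j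

/-- Discrete inner product `(u,v)_x` for x-edge arrays; index `i` stands for `i + 1/2`. -/
noncomputable def innerX (Nx Ny : ℕ) (hx hy : ℝ) (u v : ℕ → ℕ → ℝ) : ℝ :=
  ∑ i ∈ Finset.Icc 1 (Nx - 1), ∑ j ∈ Finset.Icc 1 Ny, hx * hy * u i j * v i j

/-- Discrete inner product `(u,v)_y` for y-edge arrays; index `j` stands for `j + 1/2`. -/
noncomputable def innerY (Nx Ny : ℕ) (hx hy : ℝ) (u v : ℕ → ℕ → ℝ) : ℝ :=
  ∑ i ∈ Finset.Icc 1 Nx, ∑ j ∈ Finset.Icc 1 (Ny - 1), hx * hy * u i j * v i j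

/-- `[d_x g]_{i+1/2, j}`, stored at index `(i, j)`. -/
noncomputable def dX (hx : ℝ) (g : ℕ → ℕ → ℝ) : ℕ → ℕ → ℝ := fun i j => (g (i + 1) j - g i j) / hx

/-- `[d_y g]_{i, j+1/2}`, stored at index `(i, j)`. -/
noncomputable def dY (hy : ℝ) (g : ℕ → ℕ → ℝ) : ℕ → ℕ → ℝ := fun i j => (g i (j + 1) - g i j) / hy

/-- `[D_x w]_{i,j} = (w_{i+1/2,j} - w_{i-1/2,j})/h_x` for an x-edge array `w`. -/
noncomputable def DX (hx : ℝ) (w : ℕ → ℕ → ℝ) : ℕ → ℕ → ℝ := fun i j => (w i j - w (i - 1) j) / hx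

/-- `[D_y w]_{i,j} = (w_{i,j+1/2} - w_{i,j-1/2})/h_y` for a y-edge array `w`. -/
noncomputable def DY (hy : ℝ) (w : ℕ → ℕ → ℝ) : ℕ → ℕ → ℝ := fun i j => (w i j - w i (j - 1)) / hy

/-- Five-point discrete Laplacian `[Δ_h g]_{i,j}` (meaningful at interior cells). -/
noncomputable def lapH (hx hy : ℝ) (g : ℕ → ℕ → ℝ) : ℕ → ℕ → ℝ := fun i j =>
  (g (i + 1) j - 2 * g i j + g (i - 1) j) / hx ^ 2 +
  (g i (j + 1) - 2 * g i j + g i (j - 1)) / hy ^ 2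

/-- The discrete homogeneous Neumann boundary condition for a grid function. -/
noncomputable def NeumannBC (Nx Ny : ℕ) (g : ℕ → ℕ → ℝ) : Prop :=
  (∀ j ∈ Finset.Icc 1 Ny, g 0 j = g 1 j ∧ g (Nx + 1) j = g Nx j) ∧
  (∀ i ∈ Finset.Icc 1 Nx, g i 0 = g i 1 ∧ g i (Ny + 1) = g i Ny)

/-- Extension of interior data to ghost cells via the discrete Neumann BC
(clamping of indices to the interior range). -/
noncomputable def extN (Nx Ny : ℕ) (u : ℕ → ℕ → ℝ) : ℕ → ℕ → ℝ := fun i j =>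
  u (min (max i 1) Nx) (min (max j 1) Ny)

/-- `‖∇_h g‖² = (d_x g, d_x g)_x + (d_y g, d_y g)_y`. -/
noncomputable def gradSq (Nx Ny : ℕ) (hx hy : ℝ) (g : ℕ → ℕ → ℝ) : ℝ :=
  innerX Nx Ny hx hy (dX hx g) (dX hx g) + innerY Nx Ny hx hy (dY hy g) (dY hy g)

/-- `Δ_h² g`, where `Δ_h g` is extended to ghost cells via its own Neumann BC. -/
noncomputable def lap2H (Nx Ny : ℕ) (hx hy : ℝ) (g : ℕ → ℕ → ℝ) : ℕ → ℕ → ℝ :=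
  lapH hx hy (extN Nx Ny (lapH hx hy g))

/-- `Δ_h³ g`, where `Δ_h g`, `Δ_h² g` are extended to ghost cells via their own Neumann BC. -/
noncomputable def lap3H (Nx Ny : ℕ) (hx hy : ℝ) (g : ℕ → ℕ → ℝ) : ℕ → ℕ → ℝ :=
  lapH hx hy (extN Nx Ny (lap2H Nx Ny hx hy g))

/-- Discrete energy `E_1^h(g) = Σ h_x h_y F(g_{ij})` with `F(s) = s⁴/4`. -/
noncomputable def E1h (Nx Ny : ℕ) (hx hy : ℝ) (g : ℕ → ℕ → ℝ) : ℝ :=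
  ∑ i ∈ Finset.Icc 1 Nx, ∑ j ∈ Finset.Icc 1 Ny, hx * hy * (g i j ^ 4 / 4)


/-- 1D Abel summation identity. -/
lemma abel1 (F G : ℕ → ℝ) : ∀ N, 1 ≤ N →
    ∑ i ∈ Finset.Icc 1 N, F i * ((G (i+1) - G i) - (G i - G (i-1)))
    = F N * (G (N+1) - G N) - F 1 * (G 1 - G 0)
      - ∑ i ∈ Finset.Icc 1 (N-1), (F (i+1) - F i) * (G (i+1) - G i) := by
  intro N hN1
  induction N, hN1 using Nat.le_induction with
  | base => simp; ring
  | succ N hN ih =>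
    obtain ⟨M, rfl⟩ : ∃ M, N = M + 1 := ⟨N - 1, by omega⟩
    rw [Finset.sum_Icc_succ_top (by omega : 1 ≤ M + 1 + 1), ih]
    have : (M + 1 + 1 - 1) = (M + 1 - 1) + 1 := by omega
    rw [this, Finset.sum_Icc_succ_top (by omega : 1 ≤ M + 1 - 1 + 1)]
    have h2 : (M + 1 - 1) + 1 = M + 1 := by omega
    rw [h2]
    ring

/-- Summation by parts with Neumann BC on `g`. -/
lemma sbp (Nx Ny : ℕ) (hNx : 1 ≤ Nx) (hNy : 1 ≤ Ny) (hx hy : ℝ)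
    (hhx : hx ≠ 0) (hhy : hy ≠ 0)
    (f g : ℕ → ℕ → ℝ) (hg : NeumannBC Nx Ny g) :
    innerM Nx Ny hx hy f (lapH hx hy g)
      = -(innerX Nx Ny hx hy (dX hx f) (dX hx g) + innerY Nx Ny hx hy (dY hy f) (dY hy g)) := by
  have hxpart : ∀ j ∈ Finset.Icc 1 Ny,
      ∑ i ∈ Finset.Icc 1 Nx, f i j * (((g (i+1) j) - g i j) - (g i j - g (i-1) j))
      = -∑ i ∈ Finset.Icc 1 (Nx-1), (f (i+1) j - f i j) * (g (i+1) j - g i j) := by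
    intro j hj
    have h := abel1 (fun i => f i j) (fun i => g i j) Nx hNx
    rw [h, (hg.1 j hj).1, (hg.1 j hj).2]
    ring
  have hypart : ∀ i ∈ Finset.Icc 1 Nx,
      ∑ j ∈ Finset.Icc 1 Ny, f i j * (((g i (j+1)) - g i j) - (g i j - g i (j-1)))
      = -∑ j ∈ Finset.Icc 1 (Ny-1), (f i (j+1) - f i j) * (g i (j+1) - g i j) := by
    intro i hi
    have h := abel1 (fun j => f i j) (fun j => g i j) Ny hNy
    rw [h, (hg.2 i hi).1, (hg.2 i hi).2]
    ring
  have step1 : innerM Nx Ny hx hy f (lapH hx hy g)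
      = (∑ j ∈ Finset.Icc 1 Ny, (hx*hy/hx^2) *
          ∑ i ∈ Finset.Icc 1 Nx, f i j * (((g (i+1) j) - g i j) - (g i j - g (i-1) j)))
      + (∑ i ∈ Finset.Icc 1 Nx, (hx*hy/hy^2) *
          ∑ j ∈ Finset.Icc 1 Ny, f i j * (((g i (j+1)) - g i j) - (g i j - g i (j-1)))) := by
    unfold innerM lapH
    rw [show (∑ j ∈ Finset.Icc 1 Ny, (hx*hy/hx^2) *
          ∑ i ∈ Finset.Icc 1 Nx, f i j * (((g (i+1) j) - g i j) - (g i j - g (i-1) j)))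
        = ∑ i ∈ Finset.Icc 1 Nx, ∑ j ∈ Finset.Icc 1 Ny,
            (hx*hy/hx^2) * (f i j * (((g (i+1) j) - g i j) - (g i j - g (i-1) j))) by
      rw [Finset.sum_comm]; exact Finset.sum_congr rfl fun i _ => by rw [Finset.mul_sum]]
    simp only [Finset.mul_sum, ← Finset.sum_add_distrib]
    refine Finset.sum_congr rfl fun i _ => Finset.sum_congr rfl fun j _ => ?_
    field_simp
    ring
  rw [step1,
      Finset.sum_congr rfl (fun j (hj : j ∈ Finset.Icc 1 Ny) =>
        congrArg (fun t => hx*hy/hx^2 * t) (hxpart j hj)),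
      Finset.sum_congr rfl (fun i (hi : i ∈ Finset.Icc 1 Nx) =>
        congrArg (fun t => hx*hy/hy^2 * t) (hypart i hi))]
  unfold innerX innerY dX dY
  have eqx : ∀ j, hx*hy/hx^2 * (-∑ i ∈ Finset.Icc 1 (Nx-1), (f (i+1) j - f i j)*(g (i+1) j - g i j))
      = -∑ i ∈ Finset.Icc 1 (Nx-1), hx*hy*((f (i+1) j - f i j)/hx)*((g (i+1) j - g i j)/hx) := by
    intro j
    rw [mul_neg, neg_inj, Finset.mul_sum]
    exact Finset.sum_congr rfl fun i _ => by field_simp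
  have eqy : ∀ i, hx*hy/hy^2 * (-∑ j ∈ Finset.Icc 1 (Ny-1), (f i (j+1) - f i j)*(g i (j+1) - g i j))
      = -∑ j ∈ Finset.Icc 1 (Ny-1), hx*hy*((f i (j+1) - f i j)/hy)*((g i (j+1) - g i j)/hy) := by
    intro i
    rw [mul_neg, neg_inj, Finset.mul_sum]
    exact Finset.sum_congr rfl fun j _ => by field_simp
  rw [Finset.sum_congr rfl (fun j _ => eqx j), Finset.sum_congr rfl (fun i _ => eqy i),
      Finset.sum_neg_distrib, Finset.sum_neg_distrib, ← neg_add]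
  congr 1
  congr 1
  exact Finset.sum_comm

/-- Weighted Cauchy–Schwarz for double sums. -/
lemma csD (s t : Finset ℕ) (c : ℝ) (hc : 0 ≤ c) (f g : ℕ → ℕ → ℝ) :
    (∑ i ∈ s, ∑ j ∈ t, c * f i j * g i j)^2
      ≤ (∑ i ∈ s, ∑ j ∈ t, c * f i j * f i j) * (∑ i ∈ s, ∑ j ∈ t, c * g i j * g i j) := by
  have key : ∀ u v : ℕ → ℕ → ℝ, ∑ i ∈ s, ∑ j ∈ t, c * u i j * v i j
      = ∑ p ∈ s ×ˢ t, (Real.sqrt c * u p.1 p.2) * (Real.sqrt c * v p.1 p.2) := by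
    intro u v
    rw [← Finset.sum_product']
    exact Finset.sum_congr rfl fun p _ => by
      rw [show (Real.sqrt c * u p.1 p.2) * (Real.sqrt c * v p.1 p.2)
          = (Real.sqrt c * Real.sqrt c) * (u p.1 p.2 * v p.1 p.2) by ring,
        Real.mul_self_sqrt hc]
      ring
  rw [key f g, key f f, key g g]
  have h := Finset.sum_mul_sq_le_sq_mul_sq (s ×ˢ t)
    (fun p => Real.sqrt c * f p.1 p.2) (fun p => Real.sqrt c * g p.1 p.2)
  simpa only [sq, pow_two] using h

lemma dsum_nonneg (s t : Finset ℕ) (c : ℝ) (hc : 0 ≤ c) (f : ℕ → ℕ → ℝ) :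
    0 ≤ ∑ i ∈ s, ∑ j ∈ t, c * f i j * f i j :=
  Finset.sum_nonneg fun i _ => Finset.sum_nonneg fun j _ => by
    rw [mul_assoc]; exact mul_nonneg hc (mul_self_nonneg _)


set_option maxHeartbeats 1000000 in
/-- Lemma 4.1 (control of the backward diffusion term): if `φ` satisfies the discrete
Neumann BC (and `Δ_h φ` is extended to ghost cells via its own Neumann BC), then for
every `ε > 0`,
`‖Δ_h φ‖_m² ≤ (1/(3ε²)) ‖φ‖_m² + (2ε/3) ‖∇_h(Δ_h φ)‖²`. -/
theorem control_backward_diffusion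
    (Nx Ny : ℕ) (hNx : 1 ≤ Nx) (hNy : 1 ≤ Ny)
    (hx hy : ℝ) (hhx : 0 < hx) (hhy : 0 < hy)
    (φ : ℕ → ℕ → ℝ) (hφ : NeumannBC Nx Ny φ)
    (hlapφ : NeumannBC Nx Ny (extN Nx Ny (lapH hx hy φ)))
    (ε : ℝ) (hε : 0 < ε) :
    innerM Nx Ny hx hy (lapH hx hy φ) (lapH hx hy φ) ≤
      1 / (3 * ε ^ 2) * innerM Nx Ny hx hy φ φ +
      2 * ε / 3 * gradSq Nx Ny hx hy (extN Nx Ny (lapH hx hy φ)) := by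
  have hhx' : hx ≠ 0 := ne_of_gt hhx
  have hhy' : hy ≠ 0 := ne_of_gt hhy
  have hc : (0:ℝ) ≤ hx * hy := le_of_lt (mul_pos hhx hhy)
  set L := lapH hx hy φ with hL
  set ψ := extN Nx Ny L with hψ
  -- interior identification of ψ with L
  have hψint : ∀ i ∈ Finset.Icc 1 Nx, ∀ j ∈ Finset.Icc 1 Ny, ψ i j = L i j := by
    intro i hi j hj
    rw [Finset.mem_Icc] at hi hj
    simp only [hψ, extN]
    rw [max_eq_left hi.1, min_eq_left hi.2, max_eq_left hj.1, min_eq_left hj.2]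
  -- abbreviations
  set A := innerM Nx Ny hx hy L L with hA
  set P := innerM Nx Ny hx hy φ φ with hP
  set s1 := innerX Nx Ny hx hy (dX hx ψ) (dX hx φ) with hs1d
  set s2 := innerY Nx Ny hx hy (dY hy ψ) (dY hy φ) with hs2d
  set Gx := innerX Nx Ny hx hy (dX hx φ) (dX hx φ) with hGxd
  set Gy := innerY Nx Ny hx hy (dY hy φ) (dY hy φ) with hGyd
  set Hx := innerX Nx Ny hx hy (dX hx ψ) (dX hx ψ) with hHxd
  set Hy := innerY Nx Ny hx hy (dY hy ψ) (dY hy ψ) with hHyd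
  have hAeq : A = innerM Nx Ny hx hy ψ L := by
    rw [hA]
    exact Finset.sum_congr rfl fun i hi => Finset.sum_congr rfl fun j hj => by
      rw [hψint i hi j hj]
  have hsbp1 : innerM Nx Ny hx hy ψ L = -(s1 + s2) :=
    sbp Nx Ny hNx hNy hx hy hhx' hhy' ψ φ hφ
  have hsbp2 : innerM Nx Ny hx hy φ L = -(Gx + Gy) :=
    sbp Nx Ny hNx hNy hx hy hhx' hhy' φ φ hφ
  -- nonnegativity
  have hAnn : 0 ≤ A := dsum_nonneg _ _ _ hc _
  have hPnn : 0 ≤ P := dsum_nonneg _ _ _ hc _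
  have hGx : 0 ≤ Gx := dsum_nonneg _ _ _ hc _
  have hGy : 0 ≤ Gy := dsum_nonneg _ _ _ hc _
  have hHx : 0 ≤ Hx := dsum_nonneg _ _ _ hc _
  have hHy : 0 ≤ Hy := dsum_nonneg _ _ _ hc _
  -- Cauchy–Schwarz
  have hcs1 : s1^2 ≤ Hx * Gx := csD _ _ _ hc _ _
  have hcs2 : s2^2 ≤ Hy * Gy := csD _ _ _ hc _ _
  have hcsM : (innerM Nx Ny hx hy φ L)^2 ≤ P * A := csD _ _ _ hc _ _
  -- combine
  have hAval : A = -(s1 + s2) := hAeq.trans hsbp1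
  have hcsprod : s1^2 * s2^2 ≤ (Hx * Gx) * (Hy * Gy) :=
    mul_le_mul hcs1 hcs2 (sq_nonneg _) (mul_nonneg hHx hGx)
  have hA2 : A^2 ≤ (Gx + Gy) * (Hx + Hy) := by
    rw [hAval]
    nlinarith [sq_nonneg (Hx*Gy - Hy*Gx), sq_nonneg (s1 - s2), sq_nonneg (s1 + s2),
      mul_nonneg hHx hGy, mul_nonneg hHy hGx]
  have hG2 : (Gx + Gy)^2 ≤ P * A := by
    have := hsbp2
    nlinarith [hcsM, this]
  have hA3 : A^3 ≤ P * (Hx + Hy)^2 := by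
    rcases eq_or_lt_of_le hAnn with h0 | h0
    · rw [← h0]
      have : (0:ℝ)^3 = 0 := by norm_num
      rw [this]
      exact mul_nonneg hPnn (sq_nonneg _)
    · have h4 : A^4 ≤ P * A * (Hx + Hy)^2 := by
        calc A^4 = A^2 * A^2 := by ring
          _ ≤ ((Gx + Gy) * (Hx + Hy)) * ((Gx + Gy) * (Hx + Hy)) :=
              mul_self_le_mul_self (sq_nonneg A) hA2
          _ = (Gx + Gy)^2 * (Hx + Hy)^2 := by ring
          _ ≤ (P * A) * (Hx + Hy)^2 :=
              mul_le_mul_of_nonneg_right hG2 (sq_nonneg _)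
          _ = P * A * (Hx + Hy)^2 := by ring
      have h5 : A^3 * A ≤ (P * (Hx + Hy)^2) * A := by
        calc A^3 * A = A^4 := by ring
          _ ≤ P * A * (Hx + Hy)^2 := h4
          _ = (P * (Hx + Hy)^2) * A := by ring
      exact le_of_mul_le_mul_right h5 h0
  -- final Young-type estimate
  have hHnn : 0 ≤ Hx + Hy := add_nonneg hHx hHy
  have htnn : (0:ℝ) ≤ ε^3*(Hx+Hy) := mul_nonneg (le_of_lt (pow_pos hε 3)) hHnn
  have hcube : (3*ε^2*A)^3 ≤ (P + 2*ε^3*(Hx + Hy))^3 := by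
    have hf1 : (0:ℝ) ≤ (P - ε^3*(Hx+Hy))^2*(P + 8*(ε^3*(Hx+Hy))) :=
      mul_nonneg (sq_nonneg _) (by linarith)
    have hf2 : (0:ℝ) ≤ 27*ε^6*(P*(Hx+Hy)^2 - A^3) :=
      mul_nonneg (by positivity) (by linarith)
    nlinarith [hf1, hf2]
  have key : 3*ε^2*A ≤ P + 2*ε^3*(Hx + Hy) :=
    le_of_pow_le_pow_left₀ (by norm_num) (by linarith : (0:ℝ) ≤ P + 2*ε^3*(Hx+Hy)) hcube
  have hgoal : gradSq Nx Ny hx hy ψ = Hx + Hy := rfl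
  rw [hgoal]
  have h3 : (0:ℝ) < 3*ε^2 := by positivity
  have heq : 1/(3*ε^2)*P + 2*ε/3*(Hx+Hy) = (P + 2*ε^3*(Hx+Hy))/(3*ε^2) := by
    field_simp
  rw [heq, le_div_iff₀ h3]
  nlinarith [key]
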